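/- For the two-degree-of-freedom TMD system, the quadratic cost J(ζ₂, κ) = ζ₂ε(4ζ₁²ζ₂κ + ζ₂(4ζ₁ζ₂ + ε) + ζ₁κ²(1+ε)) / (ζ₁ζ₂(4ζ₁ζ₂κ + 4ζ₂² + κ²) + ε²(ζ₁+ζ₂)(ζ₁κ² + ζ₂) + 2ζ₁ζ₂ε(κ(2ζ₁(ζ₁+ζ₂) − 1) + 2ζ₂(ζ₁+ζ₂) + κ²)) satisfies ∂J/∂κ = 0 at κ* = (ε + 2ζ₁ζ₂)/(1 + ε − 2ζ₁²), provided 1 + ε − 2ζ₁² ≠ 0 and the denominator of J is nonzero. -/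

import Mathlib

/-- For the two-degree-of-freedom TMD cost
`J(ζ₂, κ) = ζ₂ ε (4ζ₁²ζ₂κ + ζ₂(4ζ₁ζ₂ + ε) + ζ₁κ²(1+ε)) / D(κ)`,
the stationarity condition `∂J/∂κ = 0` holds at `κ* = (ε + 2ζ₁ζ₂)/(1 + ε − 2ζ₁²)`,
provided `1 + ε − 2ζ₁² ≠ 0` and the denominator of `J` is nonzero at `κ*`. -/
theorem stmt_4 (ε ζ₁ ζ₂ : ℝ) (hε : 0 < ε) (hζ₁ : 0 < ζ₁) (hζ₂ : 0 < ζ₂)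
    (num den J : ℝ → ℝ)
    (hnum : num = fun κ => ζ₂ * ε * (4 * ζ₁ ^ 2 * ζ₂ * κ + ζ₂ * (4 * ζ₁ * ζ₂ + ε)
      + ζ₁ * κ ^ 2 * (1 + ε)))
    (hden : den = fun κ => ζ₁ * ζ₂ * (4 * ζ₁ * ζ₂ * κ + 4 * ζ₂ ^ 2 + κ ^ 2)
      + ε ^ 2 * (ζ₁ + ζ₂) * (ζ₁ * κ ^ 2 + ζ₂)
      + 2 * ζ₁ * ζ₂ * ε * (κ * (2 * ζ₁ * (ζ₁ + ζ₂) - 1) + 2 * ζ₂ * (ζ₁ + ζ₂) + κ ^ 2))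
    (hJ : J = fun κ => num κ / den κ)
    (κstar : ℝ) (hκstar : κstar = (ε + 2 * ζ₁ * ζ₂) / (1 + ε - 2 * ζ₁ ^ 2))
    (h1 : 1 + ε - 2 * ζ₁ ^ 2 ≠ 0) (h2 : den κstar ≠ 0) :
    deriv J κstar = 0 := by
  subst hnum hden hJ
  set n' : ℝ := ζ₂ * ε * (4 * ζ₁ ^ 2 * ζ₂ + ζ₁ * (2 * κstar) * (1 + ε)) with hn'
  set d' : ℝ := ζ₁ * ζ₂ * (4 * ζ₁ * ζ₂ + 2 * κstar)
      + ε ^ 2 * (ζ₁ + ζ₂) * (ζ₁ * (2 * κstar))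
      + 2 * ζ₁ * ζ₂ * ε * ((2 * ζ₁ * (ζ₁ + ζ₂) - 1) + 2 * κstar) with hd'
  have hnd : HasDerivAt (fun κ => ζ₂ * ε * (4 * ζ₁ ^ 2 * ζ₂ * κ + ζ₂ * (4 * ζ₁ * ζ₂ + ε)
      + ζ₁ * κ ^ 2 * (1 + ε))) n' κstar := by
    rw [hn']
    have := (hasDerivAt_id κstar)
    have h := (((hasDerivAt_id κstar).const_mul (4 * ζ₁ ^ 2 * ζ₂)).add_const
      (ζ₂ * (4 * ζ₁ * ζ₂ + ε))).add
      ((((hasDerivAt_pow 2 κstar).const_mul ζ₁)).mul_const (1 + ε))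
    have h2' := h.const_mul (ζ₂ * ε)
    exact h2'.congr_deriv (by ring)
  have hdd : HasDerivAt (fun κ => ζ₁ * ζ₂ * (4 * ζ₁ * ζ₂ * κ + 4 * ζ₂ ^ 2 + κ ^ 2)
      + ε ^ 2 * (ζ₁ + ζ₂) * (ζ₁ * κ ^ 2 + ζ₂)
      + 2 * ζ₁ * ζ₂ * ε * (κ * (2 * ζ₁ * (ζ₁ + ζ₂) - 1) + 2 * ζ₂ * (ζ₁ + ζ₂) + κ ^ 2)) d' κstar := by
    rw [hd']
    have hA := ((((hasDerivAt_id κstar).const_mul (4 * ζ₁ * ζ₂)).add_const (4 * ζ₂ ^ 2)).add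
      (hasDerivAt_pow 2 κstar)).const_mul (ζ₁ * ζ₂)
    have hB := (((hasDerivAt_pow 2 κstar).const_mul ζ₁).add_const ζ₂).const_mul (ε ^ 2 * (ζ₁ + ζ₂))
    have hC := ((((hasDerivAt_id κstar).mul_const (2 * ζ₁ * (ζ₁ + ζ₂) - 1)).add_const
      (2 * ζ₂ * (ζ₁ + ζ₂))).add (hasDerivAt_pow 2 κstar)).const_mul (2 * ζ₁ * ζ₂ * ε)
    have h := (hA.add hB).add hC
    exact h.congr_deriv (by ring)
  have hder := (hnd.div hdd h2).deriv
  refine hder.trans ?_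
  rw [div_eq_zero_iff]
  left
  have hk : κstar * (1 + ε - 2 * ζ₁ ^ 2) = ε + 2 * ζ₁ * ζ₂ := by
    rw [hκstar]; field_simp
  rw [hn', hd']
  have hk2 : κstar = (ε + 2 * ζ₁ * ζ₂) / (1 + ε - 2 * ζ₁ ^ 2) := hκstar
  rw [hk2]
  have h1' : 1 + ε - ζ₁ ^ 2 * 2 ≠ 0 := by rwa [mul_comm] at h1
  field_simp
  ring
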